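/- arXiv:1603.00809 — 3 statements merged into one kernel-verified Lean document; each statement's English description precedes it below -/
import Mathlib

section
/- (Affine-covariant Newton–Kantorovich) Let F : D → Y be continuously Fréchet differentiable on an open convex subset D of a Banach space U. Let u₀ ∈ D and assume: F'(u₀) is invertible with α = ‖F'(u₀)⁻¹ F(u₀)‖; ‖F'(u₀)⁻¹(F'(u) − F'(v))‖ ≤ ω₀‖u − v‖ for all u,v ∈ D; h₀ = α·ω₀ ≤ 1/2; and the closed ball of radius ρ₀ = (1 − √(1 − 2h₀))/ω₀ about u₀ is contained in D. Then the Newton iteration u_{k+1} = u_k − F'(u_k)⁻¹F(u_k) is well-defined, stays in this ball, and converges to a root u* of F in the ball; moreover u* is the unique root of F in D ∩ B(u₀, ρ⁺) where ρ⁺ = (1 + √(1 − 2h₀))/ω₀. -/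
open Filter Topology Metric

/-- A sequence `u` is a Newton sequence for `F` with derivative `F'`:
at each step the derivative is invertible and
`u (k+1) = u k - F'(u k)⁻¹ (F (u k))`. -/
def IsNewtonSeq {U Y : Type*} [NormedAddCommGroup U] [NormedSpace ℝ U]
    [NormedAddCommGroup Y] [NormedSpace ℝ Y]
    (F : U → Y) (F' : U → (U →L[ℝ] Y)) (u : ℕ → U) : Prop :=
  ∀ k, ∃ A : Y →L[ℝ] U, (∀ y, F' (u k) (A y) = y) ∧ (∀ x, A (F' (u k) x) = x) ∧
    u (k + 1) = u k - A (F (u k))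

open Set in
theorem nk_taylor_bound {U Y : Type*} [NormedAddCommGroup U] [NormedSpace ℝ U]
    [NormedAddCommGroup Y] [NormedSpace ℝ Y]
    {s : Set U} (hs : Convex ℝ s) {f : U → Y} {f' : U → (U →L[ℝ] Y)}
    (hd : ∀ x ∈ s, HasFDerivAt f (f' x) x) {L : ℝ}
    (hL : ∀ x ∈ s, ∀ y ∈ s, ‖f' x - f' y‖ ≤ L * ‖x - y‖)
    {x y : U} (hx : x ∈ s) (hy : y ∈ s) :
    ‖f y - f x - f' x (y - x)‖ ≤ L / 2 * ‖y - x‖ ^ 2 := by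
  set g : ℝ → Y := fun t => f (x + t • (y - x)) - f x - t • f' x (y - x) with hg
  have hpt : ∀ t ∈ Icc (0:ℝ) 1, x + t • (y - x) ∈ s := by
    intro t ht
    have := hs.add_smul_sub_mem hx hy ht
    exact this
  have hder : ∀ t ∈ Icc (0:ℝ) 1,
      HasDerivAt g ((f' (x + t • (y - x)) - f' x) (y - x)) t := by
    intro t ht
    have h1 : HasDerivAt (fun t : ℝ => x + t • (y - x)) (y - x) t := by
      simpa using ((hasDerivAt_id t).smul_const (y - x)).const_add x
    have h2 : HasDerivAt (fun t : ℝ => f (x + t • (y - x)))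
        (f' (x + t • (y - x)) (y - x)) t :=
      (hd _ (hpt t ht)).comp_hasDerivAt t h1
    have h3 : HasDerivAt (fun t : ℝ => t • f' x (y - x)) (f' x (y - x)) t := by
      simpa using (hasDerivAt_id t).smul_const (f' x (y - x))
    have h4 := (h2.sub_const (f x)).sub h3
    convert h4 using 1
    · rfl
    · exact ContinuousLinearMap.sub_apply (f' (x + t • (y - x))) (f' x) (y - x)
  have hbound : ∀ t ∈ Ico (0:ℝ) 1,
      ‖(f' (x + t • (y - x)) - f' x) (y - x)‖ ≤ (L * ‖y - x‖ ^ 2) * t := by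
    intro t ht
    calc ‖(f' (x + t • (y - x)) - f' x) (y - x)‖
        ≤ ‖f' (x + t • (y - x)) - f' x‖ * ‖y - x‖ :=
          ContinuousLinearMap.le_opNorm _ _
      _ ≤ (L * ‖x + t • (y - x) - x‖) * ‖y - x‖ := by
          have := hL _ (hpt t ⟨ht.1, ht.2.le⟩) x hx
          exact mul_le_mul_of_nonneg_right this (norm_nonneg _)
      _ = (L * ‖y - x‖ ^ 2) * t := by
          rw [add_sub_cancel_left, norm_smul, Real.norm_eq_abs, abs_of_nonneg ht.1]
          ring
  have hB : ∀ t : ℝ, HasDerivAt (fun t : ℝ => L / 2 * ‖y - x‖ ^ 2 * t ^ 2)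
      ((L * ‖y - x‖ ^ 2) * t) t := by
    intro t
    have := (hasDerivAt_pow 2 t).const_mul (L / 2 * ‖y - x‖ ^ 2)
    refine this.congr_deriv ?_
    ring
  have key := image_norm_le_of_norm_deriv_right_le_deriv_boundary
    (f := g) (f' := fun t => (f' (x + t • (y - x)) - f' x) (y - x))
    (a := 0) (b := 1)
    (fun t ht => (hder t ht).continuousAt.continuousWithinAt)
    (fun t ht => (hder t ⟨ht.1, ht.2.le⟩).hasDerivWithinAt)
    (by simp [hg]) hB hbound
  have := key (Set.right_mem_Icc.2 zero_le_one)
  simpa [hg] using this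

set_option maxHeartbeats 1000000 in
/-- Affine-covariant Newton–Kantorovich theorem. -/
theorem newton_kantorovich
    {U Y : Type*} [NormedAddCommGroup U] [NormedSpace ℝ U] [CompleteSpace U]
    [NormedAddCommGroup Y] [NormedSpace ℝ Y] [CompleteSpace Y]
    (D : Set U) (hDopen : IsOpen D) (hDconv : Convex ℝ D)
    (F : U → Y) (F' : U → (U →L[ℝ] Y))
    (hdiff : ∀ u ∈ D, HasFDerivAt F (F' u) u) (hcont : ContinuousOn F' D)
    (u₀ : U) (hu₀ : u₀ ∈ D)
    (A₀ : Y →L[ℝ] U) (hA₀l : ∀ y, F' u₀ (A₀ y) = y) (hA₀r : ∀ x, A₀ (F' u₀ x) = x)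
    (α ω₀ : ℝ) (hω₀ : 0 < ω₀)
    (hα : ‖A₀ (F u₀)‖ = α)
    (hLip : ∀ u ∈ D, ∀ v ∈ D, ‖A₀.comp (F' u - F' v)‖ ≤ ω₀ * ‖u - v‖)
    (h₀ : α * ω₀ ≤ 1 / 2)
    (hball : closedBall u₀ ((1 - Real.sqrt (1 - 2 * (α * ω₀))) / ω₀) ⊆ D) :
    ∃ u : ℕ → U, u 0 = u₀ ∧ IsNewtonSeq F F' u ∧
      (∀ k, u k ∈ closedBall u₀ ((1 - Real.sqrt (1 - 2 * (α * ω₀))) / ω₀)) ∧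
      ∃ uStar ∈ closedBall u₀ ((1 - Real.sqrt (1 - 2 * (α * ω₀))) / ω₀),
        F uStar = 0 ∧ Tendsto u atTop (𝓝 uStar) ∧
        ∀ v ∈ D ∩ ball u₀ ((1 + Real.sqrt (1 - 2 * (α * ω₀))) / ω₀),
          F v = 0 → v = uStar := by
  have hα0 : 0 ≤ α := hα ▸ norm_nonneg _
  set σ : ℝ := Real.sqrt (1 - 2 * (α * ω₀)) with hσdef
  have hσ0 : 0 ≤ σ := Real.sqrt_nonneg _
  have hσσ : σ ^ 2 = 1 - 2 * (α * ω₀) := Real.sq_sqrt (by linarith)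
  have hσ1 : σ ≤ 1 := by nlinarith [mul_nonneg hα0 hω₀.le]
  -- the scalar majorant error sequence
  set e : ℕ → ℝ := fun n => Nat.rec ((1 - σ) / ω₀)
    (fun _ E => ω₀ * E ^ 2 / (2 * (σ + ω₀ * E))) n with hedef
  have he0 : e 0 = (1 - σ) / ω₀ := rfl
  have heS : ∀ k, e (k + 1) = ω₀ * (e k) ^ 2 / (2 * (σ + ω₀ * e k)) := fun k => rfl
  clear_value e
  have hω0' : ω₀ ≠ 0 := ne_of_gt hω₀
  have hepos : ∀ k, 0 ≤ e k ∧ 0 < σ + ω₀ * e k := by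
    intro k
    induction k with
    | zero =>
      constructor
      · rw [he0]; exact div_nonneg (by linarith) hω₀.le
      · rw [he0, mul_div_cancel₀ _ hω0']; norm_num
    | succ k ih =>
      obtain ⟨h1, h2⟩ := ih
      have hnn : 0 ≤ e (k + 1) := by
        rw [heS]; exact div_nonneg (by positivity) (by linarith)
      refine ⟨hnn, ?_⟩
      rcases eq_or_lt_of_le h1 with h | h
      · have : σ > 0 := by rw [← h] at h2; simpa using h2
        have := mul_nonneg hω₀.le hnn
        linarith
      · have : 0 < e (k + 1) := by
          rw [heS]; exact div_pos (by positivity) (by linarith)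
        nlinarith
  have hehalf : ∀ k, e (k + 1) ≤ e k / 2 := by
    intro k
    obtain ⟨h1, h2⟩ := hepos k
    rw [heS, div_le_div_iff₀ (by linarith) (by norm_num)]
    nlinarith
  have hemono : ∀ k, e (k + 1) ≤ e k := fun k =>
    (hehalf k).trans (by linarith [(hepos k).1])
  have hAnti : Antitone e := antitone_nat_of_succ_le hemono
  have hgeo : ∀ k, e k ≤ e 0 * (1 / 2) ^ k := by
    intro k
    induction k with
    | zero => simp
    | succ k ih =>
      calc e (k + 1) ≤ e k / 2 := hehalf k
        _ ≤ e 0 * (1 / 2) ^ k / 2 := by linarith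
        _ = e 0 * (1 / 2) ^ (k + 1) := by ring
  -- the Newton sequence for G = A₀ ∘ F
  set u : ℕ → U := fun n => Nat.rec u₀
    (fun _ x => x - Ring.inverse (A₀.comp (F' x)) (A₀ (F x))) n with hudef
  have hu0 : u 0 = u₀ := rfl
  have huS : ∀ k, u (k + 1) = u k - Ring.inverse (A₀.comp (F' (u k))) (A₀ (F (u k))) :=
    fun k => rfl
  clear_value u
  -- basic facts about G
  have hG'₀ : A₀.comp (F' u₀) = 1 := by
    ext x; simpa using hA₀r x
  have hGlip : ∀ x ∈ D, ∀ y ∈ D,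
      ‖A₀.comp (F' x) - A₀.comp (F' y)‖ ≤ ω₀ * ‖x - y‖ := by
    intro x hx y hy
    have := hLip x hx y hy
    rwa [ContinuousLinearMap.comp_sub] at this
  have hGdiff : ∀ x ∈ D, HasFDerivAt (fun z => A₀ (F z)) (A₀.comp (F' x)) x :=
    fun x hx => (A₀.hasFDerivAt).comp x (hdiff x hx)
  have hball' : closedBall u₀ ((1 - σ) / ω₀) ⊆ D := hball
  have hωe0 : ω₀ * e 0 = 1 - σ := by rw [he0, mul_div_cancel₀ _ hω0']
  -- facts derivable from membership estimate
  have step_facts : ∀ k, ‖u k - u₀‖ ≤ e 0 - e k →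
      u k ∈ D ∧ IsUnit (A₀.comp (F' (u k))) ∧
      ‖Ring.inverse (A₀.comp (F' (u k)))‖ ≤ (σ + ω₀ * e k)⁻¹ := by
    intro k hin
    obtain ⟨hek, hdk⟩ := hepos k
    have hmem : u k ∈ closedBall u₀ ((1 - σ) / ω₀) := by
      rw [mem_closedBall, dist_eq_norm, ← he0]
      exact hin.trans (by linarith)
    have hmemD : u k ∈ D := hball' hmem
    have hone : ‖(1 : U →L[ℝ] U) - A₀.comp (F' (u k))‖ ≤ 1 - (σ + ω₀ * e k) := by
      rw [← hG'₀]
      calc ‖A₀.comp (F' u₀) - A₀.comp (F' (u k))‖ ≤ ω₀ * ‖u₀ - u k‖ :=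
            hGlip u₀ hu₀ (u k) hmemD
        _ = ω₀ * ‖u k - u₀‖ := by rw [norm_sub_rev]
        _ ≤ ω₀ * (e 0 - e k) := by
            exact mul_le_mul_of_nonneg_left hin hω₀.le
        _ = 1 - (σ + ω₀ * e k) := by rw [mul_sub, hωe0]; ring
    have hlt1 : ‖(1 : U →L[ℝ] U) - A₀.comp (F' (u k))‖ < 1 := lt_of_le_of_lt hone (by linarith)
    have hunit : IsUnit (A₀.comp (F' (u k))) := by
      have := isUnit_one_sub_of_norm_lt_one hlt1
      simpa using this
    refine ⟨hmemD, hunit, ?_⟩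
    have hinv_eq : Ring.inverse (A₀.comp (F' (u k))) =
        ∑' n : ℕ, ((1 : U →L[ℝ] U) - A₀.comp (F' (u k))) ^ n := by
      rw [geom_series_eq_inverse _ hlt1, sub_sub_cancel]
    rw [hinv_eq]
    have h1 := tsum_geometric_le_of_norm_lt_one _ hlt1
    have hid : ‖(1 : U →L[ℝ] U)‖ ≤ 1 := ContinuousLinearMap.norm_id_le
    have hmon : (1 - ‖(1 : U →L[ℝ] U) - A₀.comp (F' (u k))‖)⁻¹ ≤ (σ + ω₀ * e k)⁻¹ := by
      apply inv_anti₀ hdk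
      linarith
    calc ‖∑' n : ℕ, ((1 : U →L[ℝ] U) - A₀.comp (F' (u k))) ^ n‖
        ≤ ‖(1 : U →L[ℝ] U)‖ - 1 + (1 - ‖(1 : U →L[ℝ] U) - A₀.comp (F' (u k))‖)⁻¹ := h1
      _ ≤ (1 - ‖(1 : U →L[ℝ] U) - A₀.comp (F' (u k))‖)⁻¹ := by linarith
      _ ≤ (σ + ω₀ * e k)⁻¹ := hmon
  -- the main induction
  have key : ∀ k, ‖u k - u₀‖ ≤ e 0 - e k ∧
      ‖A₀ (F (u k))‖ ≤ ω₀ / 2 * (e k) ^ 2 + σ * e k := by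
    intro k
    induction k with
    | zero =>
      constructor
      · rw [hu0]; simp
      · have hval : ω₀ / 2 * (e 0) ^ 2 + σ * e 0 = α := by
          rw [he0]; field_simp; nlinarith [hσσ]
        rw [hu0, hα, hval]
    | succ k ih =>
      obtain ⟨h1, h2⟩ := ih
      obtain ⟨hek, hdk⟩ := hepos k
      obtain ⟨hek1, _⟩ := hepos (k + 1)
      obtain ⟨hmemD, hunit, hinv⟩ := step_facts k h1
      have hstep : ‖u (k + 1) - u k‖ ≤ e k - e (k + 1) := by
        rw [huS k]
        have : u k - Ring.inverse (A₀.comp (F' (u k))) (A₀ (F (u k))) - u k =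
            -(Ring.inverse (A₀.comp (F' (u k))) (A₀ (F (u k)))) := by abel
        rw [this, norm_neg]
        calc ‖Ring.inverse (A₀.comp (F' (u k))) (A₀ (F (u k)))‖
            ≤ ‖Ring.inverse (A₀.comp (F' (u k)))‖ * ‖A₀ (F (u k))‖ :=
              ContinuousLinearMap.le_opNorm _ _
          _ ≤ (σ + ω₀ * e k)⁻¹ * (ω₀ / 2 * (e k) ^ 2 + σ * e k) := by
              apply mul_le_mul hinv h2 (norm_nonneg _) (by positivity)
          _ = e k - e (k + 1) := by
              rw [heS]; field_simp; ring
      have h1' : ‖u (k + 1) - u₀‖ ≤ e 0 - e (k + 1) := by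
        calc ‖u (k + 1) - u₀‖ ≤ ‖u (k + 1) - u k‖ + ‖u k - u₀‖ :=
              norm_sub_le_norm_sub_add_norm_sub _ _ _
          _ ≤ (e k - e (k + 1)) + (e 0 - e k) := add_le_add hstep h1
          _ = e 0 - e (k + 1) := by ring
      refine ⟨h1', ?_⟩
      have hmem' : u (k + 1) ∈ D := by
        apply hball'
        rw [mem_closedBall, dist_eq_norm, ← he0]
        exact h1'.trans (by linarith)
      have htay := nk_taylor_bound hDconv hGdiff hGlip hmemD hmem'
      have hcanc : A₀ (F (u k)) + (A₀.comp (F' (u k))) (u (k + 1) - u k) = 0 := by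
        rw [huS k]
        have h5 : u k - Ring.inverse (A₀.comp (F' (u k))) (A₀ (F (u k))) - u k =
            -(Ring.inverse (A₀.comp (F' (u k))) (A₀ (F (u k)))) := by abel
        rw [h5, map_neg]
        have h6 := DFunLike.congr_fun (Ring.mul_inverse_cancel _ hunit) (A₀ (F (u k)))
        rw [ContinuousLinearMap.mul_apply] at h6
        rw [h6]
        simp
      have hGnew : A₀ (F (u (k + 1))) =
          A₀ (F (u (k + 1))) - A₀ (F (u k)) - (A₀.comp (F' (u k))) (u (k + 1) - u k) := by
        rw [sub_sub, hcanc, sub_zero]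
      have hiden : ω₀ / 2 * (e k - e (k + 1)) ^ 2 =
          ω₀ / 2 * (e (k + 1)) ^ 2 + σ * e (k + 1) := by
        rw [heS]; field_simp; ring
      calc ‖A₀ (F (u (k + 1)))‖
          = ‖A₀ (F (u (k + 1))) - A₀ (F (u k)) - (A₀.comp (F' (u k))) (u (k + 1) - u k)‖ := by
            rw [← hGnew]
        _ ≤ ω₀ / 2 * ‖u (k + 1) - u k‖ ^ 2 := htay
        _ ≤ ω₀ / 2 * (e k - e (k + 1)) ^ 2 := by
            apply mul_le_mul_of_nonneg_left _ (by positivity)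
            exact pow_le_pow_left₀ (norm_nonneg _) hstep 2
        _ = ω₀ / 2 * (e (k + 1)) ^ 2 + σ * e (k + 1) := hiden
  -- membership in the ball
  have hmemball : ∀ k, u k ∈ closedBall u₀ ((1 - σ) / ω₀) := by
    intro k
    rw [mem_closedBall, dist_eq_norm, ← he0]
    exact (key k).1.trans (by linarith [(hepos k).1])
  -- Newton sequence property
  have hnewton : ∀ k, ∃ A : Y →L[ℝ] U, (∀ y, F' (u k) (A y) = y) ∧
      (∀ x, A (F' (u k) x) = x) ∧ u (k + 1) = u k - A (F (u k)) := by
    intro k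
    obtain ⟨_, hunit, _⟩ := step_facts k (key k).1
    set g := A₀.comp (F' (u k)) with hgdef
    refine ⟨(Ring.inverse g).comp A₀, ?_, ?_, ?_⟩
    · intro y
      have hgr : g (Ring.inverse g (A₀ y)) = A₀ y := by
        have h6 := DFunLike.congr_fun (Ring.mul_inverse_cancel _ hunit) (A₀ y)
        rw [ContinuousLinearMap.mul_apply] at h6
        simpa using h6
      have : A₀ (F' (u k) (Ring.inverse g (A₀ y))) = A₀ y := by
        simpa [hgdef] using hgr
      calc F' (u k) ((Ring.inverse g).comp A₀ y)
          = F' u₀ (A₀ (F' (u k) (Ring.inverse g (A₀ y)))) := (hA₀l _).symm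
        _ = F' u₀ (A₀ y) := by rw [this]
        _ = y := hA₀l y
    · intro x
      have h6 := DFunLike.congr_fun (Ring.inverse_mul_cancel _ hunit) x
      rw [ContinuousLinearMap.mul_apply] at h6
      simpa [hgdef] using h6
    · rw [huS k]; rfl
  -- Cauchy and limit
  have hcau : CauchySeq u := by
    apply cauchySeq_of_le_geometric (1 / 2) (e 0) (by norm_num)
    intro n
    rw [dist_eq_norm, norm_sub_rev]
    calc ‖u (n + 1) - u n‖ ≤ e n - e (n + 1) := by
          obtain ⟨h1, h2⟩ := key n
          obtain ⟨_, hunit, hinv⟩ := step_facts n h1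
          rw [huS n]
          have h5 : u n - Ring.inverse (A₀.comp (F' (u n))) (A₀ (F (u n))) - u n =
              -(Ring.inverse (A₀.comp (F' (u n))) (A₀ (F (u n)))) := by abel
          rw [h5, norm_neg]
          calc ‖Ring.inverse (A₀.comp (F' (u n))) (A₀ (F (u n)))‖
              ≤ ‖Ring.inverse (A₀.comp (F' (u n)))‖ * ‖A₀ (F (u n))‖ :=
                ContinuousLinearMap.le_opNorm _ _
            _ ≤ (σ + ω₀ * e n)⁻¹ * (ω₀ / 2 * (e n) ^ 2 + σ * e n) := by
                obtain ⟨hek, hdk⟩ := hepos n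
                apply mul_le_mul hinv h2 (norm_nonneg _) (by positivity)
            _ = e n - e (n + 1) := by
                obtain ⟨hek, hdk⟩ := hepos n
                rw [heS]; field_simp; ring
      _ ≤ e n := by linarith [(hepos (n + 1)).1]
      _ ≤ e 0 * (1 / 2) ^ n := hgeo n
  obtain ⟨uStar, hlim⟩ := cauchySeq_tendsto_of_complete hcau
  have hstar_mem : uStar ∈ closedBall u₀ ((1 - σ) / ω₀) :=
    isClosed_closedBall.mem_of_tendsto hlim (Eventually.of_forall hmemball)
  have hstarD : uStar ∈ D := hball' hstar_mem
  -- e tends to 0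
  have he_to0 : Tendsto e atTop (𝓝 0) := by
    have h2 : Tendsto (fun k : ℕ => e 0 * (1 / 2) ^ k) atTop (𝓝 (e 0 * 0)) :=
      (tendsto_pow_atTop_nhds_zero_of_lt_one (by norm_num) (by norm_num)).const_mul (e 0)
    rw [mul_zero] at h2
    exact squeeze_zero (fun n => (hepos n).1) hgeo h2
  -- G (u k) tends to 0
  have hGu0 : Tendsto (fun k => A₀ (F (u k))) atTop (𝓝 0) := by
    rw [tendsto_zero_iff_norm_tendsto_zero]
    have hb : Tendsto (fun k => ω₀ / 2 * (e k) ^ 2 + σ * e k) atTop (𝓝 (ω₀ / 2 * 0 ^ 2 + σ * 0)) := by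
      exact (((he_to0.pow 2).const_mul _).add (he_to0.const_mul σ))
    simp only [mul_zero, zero_pow, add_zero, ne_eq, OfNat.ofNat_ne_zero,
      not_false_eq_true] at hb
    exact squeeze_zero (fun n => norm_nonneg _) (fun n => (key n).2) (by simpa using hb)
  have hGstar : A₀ (F uStar) = 0 := by
    have hc : Tendsto (fun k => A₀ (F (u k))) atTop (𝓝 (A₀ (F uStar))) :=
      ((hGdiff uStar hstarD).continuousAt.tendsto.comp hlim)
    exact tendsto_nhds_unique hc hGu0
  have hFstar : F uStar = 0 := by
    rw [← hA₀l (F uStar), hGstar, map_zero]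
  refine ⟨u, hu0, hnewton, hmemball, uStar, hstar_mem, hFstar, hlim, ?_⟩
  -- uniqueness
  rintro v ⟨hvD, hvball⟩ hFv
  have hGv : A₀ (F v) = 0 := by rw [hFv, map_zero]
  set f : ℕ → ℝ := fun k => 2 * σ / ω₀ + e k with hfdef
  have hf0 : f 0 = (1 + σ) / ω₀ := by
    simp only [hfdef, he0]; field_simp; ring
  have hρplus : (0 : ℝ) < (1 + σ) / ω₀ := by positivity
  set q : ℝ := ‖v - u₀‖ / ((1 + σ) / ω₀) with hqdef
  have hq0 : 0 ≤ q := by positivity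
  have hq1 : q < 1 := by
    rw [hqdef, div_lt_one hρplus]
    rw [mem_ball, dist_eq_norm] at hvball
    exact hvball
  have hfpos : ∀ k, 0 ≤ f k := fun k => by
    have := (hepos k).1
    have : (0:ℝ) ≤ 2 * σ / ω₀ := by positivity
    simp only [hfdef]
    linarith [(hepos k).1]
  have claim : ∀ k, ‖v - u k‖ ≤ q ^ (2 ^ k) * f k := by
    intro k
    induction k with
    | zero =>
      rw [pow_zero, pow_one, hf0, hqdef, div_mul_cancel₀ _ (ne_of_gt hρplus), hu0]
    | succ k ih =>
      obtain ⟨h1, h2⟩ := key k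
      obtain ⟨hek, hdk⟩ := hepos k
      obtain ⟨hmemD, hunit, hinv⟩ := step_facts k h1
      have htay := nk_taylor_bound hDconv hGdiff hGlip hmemD hvD
      have hid : v - u (k + 1) = Ring.inverse (A₀.comp (F' (u k)))
          ((A₀.comp (F' (u k))) (v - u k) + A₀ (F (u k))) := by
        rw [map_add, huS k]
        have h6 := DFunLike.congr_fun (Ring.inverse_mul_cancel _ hunit) (v - u k)
        rw [ContinuousLinearMap.mul_apply, ContinuousLinearMap.one_apply] at h6
        rw [h6]
        abel
      have hnorm1 : ‖(A₀.comp (F' (u k))) (v - u k) + A₀ (F (u k))‖ ≤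
          ω₀ / 2 * ‖v - u k‖ ^ 2 := by
        have : (A₀.comp (F' (u k))) (v - u k) + A₀ (F (u k)) =
            -(A₀ (F v) - A₀ (F (u k)) - (A₀.comp (F' (u k))) (v - u k)) := by
          rw [hGv]; abel
        rw [this, norm_neg]
        exact htay
      have hsq : ‖v - u k‖ ^ 2 ≤ (q ^ (2 ^ k) * f k) ^ 2 :=
        pow_le_pow_left₀ (norm_nonneg _) ih 2
      have hiden2 : (σ + ω₀ * e k)⁻¹ * (ω₀ / 2 * (f k) ^ 2) = f (k + 1) := by
        simp only [hfdef, heS]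
        field_simp
        ring
      calc ‖v - u (k + 1)‖
          ≤ ‖Ring.inverse (A₀.comp (F' (u k)))‖ *
            ‖(A₀.comp (F' (u k))) (v - u k) + A₀ (F (u k))‖ := by
            rw [hid]; exact ContinuousLinearMap.le_opNorm _ _
        _ ≤ (σ + ω₀ * e k)⁻¹ * (ω₀ / 2 * ‖v - u k‖ ^ 2) := by
            apply mul_le_mul hinv hnorm1 (norm_nonneg _) (by positivity)
        _ ≤ (σ + ω₀ * e k)⁻¹ * (ω₀ / 2 * ((q ^ (2 ^ k) * f k) ^ 2)) := by
            apply mul_le_mul_of_nonneg_left _ (by positivity)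
            apply mul_le_mul_of_nonneg_left hsq (by positivity)
        _ = q ^ (2 ^ (k + 1)) * ((σ + ω₀ * e k)⁻¹ * (ω₀ / 2 * (f k) ^ 2)) := by
            rw [mul_pow, ← pow_mul, pow_succ]
            ring
        _ = q ^ (2 ^ (k + 1)) * f (k + 1) := by rw [hiden2]
  -- conclude v = uStar
  have hbound : ∀ k, ‖v - u k‖ ≤ ((1 + σ) / ω₀) * q ^ k := by
    intro k
    calc ‖v - u k‖ ≤ q ^ (2 ^ k) * f k := claim k
      _ ≤ q ^ k * f 0 := by
          apply mul_le_mul _ _ (hfpos k) (by positivity)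
          · exact pow_le_pow_of_le_one hq0 hq1.le (Nat.le_of_lt (Nat.lt_two_pow_self))
          · simp only [hfdef]
            linarith [hAnti (Nat.zero_le k)]
      _ = ((1 + σ) / ω₀) * q ^ k := by rw [hf0]; ring
  have hvlim : Tendsto u atTop (𝓝 v) := by
    rw [tendsto_iff_norm_sub_tendsto_zero]
    have h2 : Tendsto (fun k : ℕ => ((1 + σ) / ω₀) * q ^ k) atTop (𝓝 (((1 + σ) / ω₀) * 0)) :=
      (tendsto_pow_atTop_nhds_zero_of_lt_one hq0 hq1).const_mul _
    rw [mul_zero] at h2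
    apply squeeze_zero (fun n => norm_nonneg _) _ h2
    intro n
    rw [norm_sub_rev]
    exact hbound n
  exact tendsto_nhds_unique hvlim hlim
end

section
/- (Affine-covariant Rall–Rheinboldt) Let F : D → Y be continuously Fréchet differentiable on an open convex D ⊆ U, and suppose u* ∈ D satisfies F(u*) = 0, F'(u*) is invertible, and ‖F'(u*)⁻¹(F'(u) − F'(v))‖ ≤ ω*‖u − v‖ for all u,v ∈ D. Then for any ρ* ≤ 2/(3ω*) with B(u*, ρ*) ⊆ D, the Newton sequence started at any u₀ ∈ B(u*, ρ*) is well-defined, remains in B(u*, ρ*), and converges to u*. Moreover u* is the unique root of F in D ∩ B(u*, 1/ω*). -/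
open Filter Topology Metric intervalIntegral


lemma rr_taylor_aux {U Y : Type*} [NormedAddCommGroup U] [NormedSpace ℝ U] [CompleteSpace U]
    [NormedAddCommGroup Y] [NormedSpace ℝ Y]
    (D : Set U) (F : U → Y) (F' : U → (U →L[ℝ] Y))
    (hdiff : ∀ u ∈ D, HasFDerivAt F (F' u) u) (hcont : ContinuousOn F' D)
    (A : Y →L[ℝ] U) (ω : ℝ) (hω : 0 ≤ ω)
    (hLip : ∀ u ∈ D, ∀ v ∈ D, ‖A.comp (F' u - F' v)‖ ≤ ω * ‖u - v‖)
    (a b : U) (hseg : segment ℝ a b ⊆ D) :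
    ‖A (F b) - A (F a) - A (F' a (b - a))‖ ≤ ω / 2 * ‖b - a‖ ^ 2 := by
  set d := b - a with hd
  set γ : ℝ → U := fun t => a + t • d with hγdef
  have hγmem : ∀ t ∈ Set.Icc (0:ℝ) 1, γ t ∈ D := by
    intro t ht
    apply hseg
    rw [segment_eq_image']
    exact ⟨t, ht, rfl⟩
  have haD : a ∈ D := hseg (left_mem_segment ℝ a b)
  set φ : ℝ → U := fun t => A (F (γ t)) - t • A (F' a d) with hφdef
  set φ' : ℝ → U := fun t => A (F' (γ t) d) - A (F' a d) with hφ'def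
  have hderiv : ∀ t ∈ Set.uIcc (0:ℝ) 1, HasDerivAt φ (φ' t) t := by
    intro t ht
    rw [Set.uIcc_of_le zero_le_one] at ht
    have h1 : HasDerivAt γ d t := by
      simpa [hγdef] using ((hasDerivAt_id t).smul_const d).const_add a
    have h2 : HasDerivAt (fun s => F (γ s)) (F' (γ t) d) t :=
      (hdiff _ (hγmem t ht)).comp_hasDerivAt t h1
    have h3 : HasDerivAt (fun s => A (F (γ s))) (A (F' (γ t) d)) t :=
      A.hasFDerivAt.comp_hasDerivAt t h2
    have h4 : HasDerivAt (fun s : ℝ => s • A (F' a d)) (A (F' a d)) t := by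
      simpa using (hasDerivAt_id t).smul_const (A (F' a d))
    exact h3.sub h4
  have hγcont : Continuous γ := by continuity
  have hφ'cont : ContinuousOn φ' (Set.uIcc (0:ℝ) 1) := by
    rw [Set.uIcc_of_le zero_le_one]
    have h5 : ContinuousOn (fun t => F' (γ t)) (Set.Icc (0:ℝ) 1) :=
      hcont.comp hγcont.continuousOn hγmem
    exact (A.continuous.comp_continuousOn (h5.clm_apply continuousOn_const)).sub
      continuousOn_const
  have hint : IntervalIntegrable φ' MeasureTheory.volume 0 1 :=
    hφ'cont.intervalIntegrable
  have hftc : ∫ t in (0:ℝ)..1, φ' t = φ 1 - φ 0 :=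
    integral_eq_sub_of_hasDerivAt hderiv hint
  have hφ1 : φ 1 - φ 0 = A (F b) - A (F a) - A (F' a (b - a)) := by
    simp only [hφdef, hγdef, one_smul, zero_smul, sub_zero, hd, add_sub_cancel]
    abel
  have hbound : ∀ t ∈ Set.Ioc (0:ℝ) 1, ‖φ' t‖ ≤ ω * ‖d‖ ^ 2 * t := by
    intro t ht
    have ht' : t ∈ Set.Icc (0:ℝ) 1 := Set.Ioc_subset_Icc_self ht
    have heq : φ' t = (A.comp (F' (γ t) - F' a)) d := by
      simp [hφ'def, ContinuousLinearMap.comp_apply, ContinuousLinearMap.sub_apply, map_sub]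
    rw [heq]
    calc ‖(A.comp (F' (γ t) - F' a)) d‖ ≤ ‖A.comp (F' (γ t) - F' a)‖ * ‖d‖ :=
          (A.comp (F' (γ t) - F' a)).le_opNorm d
      _ ≤ ω * ‖γ t - a‖ * ‖d‖ := by
          exact mul_le_mul_of_nonneg_right (hLip _ (hγmem t ht') _ haD) (norm_nonneg d)
      _ = ω * ‖d‖ ^ 2 * t := by
          have : γ t - a = t • d := by simp [hγdef]
          rw [this, norm_smul, Real.norm_of_nonneg ht'.1]
          ring
  have hbound' : ∀ᵐ t ∂(MeasureTheory.volume.restrict (Set.uIoc (0:ℝ) 1)),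
      ‖φ' t‖ ≤ ω * ‖d‖ ^ 2 * t := by
    rw [Set.uIoc_of_le zero_le_one]
    exact (MeasureTheory.ae_restrict_mem measurableSet_Ioc).mono hbound
  have hgint : IntervalIntegrable (fun t => ω * ‖d‖ ^ 2 * t) MeasureTheory.volume 0 1 :=
    (continuous_const.mul continuous_id).intervalIntegrable 0 1
  have hnorm : ‖∫ t in (0:ℝ)..1, φ' t‖ ≤ |∫ t in (0:ℝ)..1, ω * ‖d‖ ^ 2 * t| :=
    (norm_integral_le_of_norm_le zero_le_one (MeasureTheory.ae_of_all _ hbound) hgint).trans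
      (le_abs_self _)
  have hval : ∫ t in (0:ℝ)..1, ω * ‖d‖ ^ 2 * t = ω * ‖d‖ ^ 2 * (1 / 2) := by
    rw [intervalIntegral.integral_const_mul, integral_id]
    ring
  rw [← hφ1, ← hftc]
  calc ‖∫ t in (0:ℝ)..1, φ' t‖ ≤ |∫ t in (0:ℝ)..1, ω * ‖d‖ ^ 2 * t| := hnorm
    _ = |ω * ‖d‖ ^ 2 * (1 / 2)| := by rw [hval]
    _ ≤ ω / 2 * ‖d‖ ^ 2 := by
        rw [abs_of_nonneg (by positivity)]; ring_nf; exact le_refl _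

lemma rr_inv_norm_le {U : Type*} [NormedAddCommGroup U] [NormedSpace ℝ U] [CompleteSpace U]
    (t : U →L[ℝ] U) (h : ‖t‖ < 1) :
    ‖(↑(Units.oneSub t h)⁻¹ : U →L[ℝ] U)‖ ≤ (1 - ‖t‖)⁻¹ := by
  have h1 : (↑(Units.oneSub t h)⁻¹ : U →L[ℝ] U) = ∑' n : ℕ, t ^ n := rfl
  have h2 := tsum_geometric_le_of_norm_lt_one t h
  have h3 : ‖(1 : U →L[ℝ] U)‖ ≤ 1 := ContinuousLinearMap.norm_id_le
  rw [h1]; linarith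

lemma rr_step {U Y : Type*} [NormedAddCommGroup U] [NormedSpace ℝ U] [CompleteSpace U]
    [NormedAddCommGroup Y] [NormedSpace ℝ Y]
    (D : Set U) (F : U → Y) (F' : U → (U →L[ℝ] Y))
    (hdiff : ∀ u ∈ D, HasFDerivAt F (F' u) u) (hcont : ContinuousOn F' D)
    (uStar : U) (huStar : uStar ∈ D) (hroot : F uStar = 0)
    (A : Y →L[ℝ] U) (hAl : ∀ y, F' uStar (A y) = y) (hAr : ∀ x, A (F' uStar x) = x)
    (ω : ℝ) (hω : 0 ≤ ω)
    (hLip : ∀ u ∈ D, ∀ v ∈ D, ‖A.comp (F' u - F' v)‖ ≤ ω * ‖u - v‖)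
    (w : U) (hwD : w ∈ D) (hseg : segment ℝ w uStar ⊆ D)
    (hwn : ω * ‖w - uStar‖ < 1) :
    ∃ B : Y →L[ℝ] U, (∀ y, F' w (B y) = y) ∧ (∀ x, B (F' w x) = x) ∧
      (Ring.inverse (A.comp (F' w))) (A (F w)) = B (F w) ∧
      ‖w - B (F w) - uStar‖ ≤ (1 - ω * ‖w - uStar‖)⁻¹ * (ω / 2 * ‖w - uStar‖ ^ 2) := by
  set M := A.comp (F' w) with hM
  have hone : (1 : U →L[ℝ] U) - M = A.comp (F' uStar - F' w) := by
    ext x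
    simp [hM, ContinuousLinearMap.comp_apply, ContinuousLinearMap.sub_apply, map_sub, hAr]
  have hnt : ‖(1 : U →L[ℝ] U) - M‖ ≤ ω * ‖w - uStar‖ := by
    rw [hone, norm_sub_rev w uStar]
    exact hLip uStar huStar w hwD
  have hlt : ‖(1 : U →L[ℝ] U) - M‖ < 1 := lt_of_le_of_lt hnt hwn
  set W := Units.oneSub _ hlt with hW
  have hWval : (↑W : U →L[ℝ] U) = M := by
    rw [hW, Units.val_oneSub, sub_sub_cancel]
  have hMW : M * (↑W⁻¹ : U →L[ℝ] U) = 1 := by rw [← hWval]; exact W.mul_inv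
  have hWM : (↑W⁻¹ : U →L[ℝ] U) * M = 1 := by rw [← hWval]; exact W.inv_mul
  have hWMap : ∀ z : U, (↑W⁻¹ : U →L[ℝ] U) (M z) = z := by
    intro z
    simpa [ContinuousLinearMap.mul_apply] using
      congrArg (fun (T : U →L[ℝ] U) => T z) hWM
  have hMWap : ∀ z : U, M ((↑W⁻¹ : U →L[ℝ] U) z) = z := by
    intro z
    simpa [ContinuousLinearMap.mul_apply] using
      congrArg (fun (T : U →L[ℝ] U) => T z) hMW
  refine ⟨(↑W⁻¹ : U →L[ℝ] U).comp A, ?_, ?_, ?_, ?_⟩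
  · intro y
    have hcompW : F' w = (F' uStar).comp M := by
      ext x; simp [hM, ContinuousLinearMap.comp_apply, hAl]
    calc F' w (((↑W⁻¹ : U →L[ℝ] U)).comp A y)
        = F' uStar (M ((↑W⁻¹ : U →L[ℝ] U) (A y))) := by rw [hcompW]; rfl
      _ = F' uStar (A y) := by rw [hMWap]
      _ = y := hAl y
  · intro x
    exact hWMap x
  · rw [← hWval, Ring.inverse_unit]; rfl
  · have htay := rr_taylor_aux D F F' hdiff hcont A ω hω hLip w uStar hseg
    have hkey : w - ((↑W⁻¹ : U →L[ℝ] U).comp A) (F w) - uStar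
        = (↑W⁻¹ : U →L[ℝ] U) (M (w - uStar) - A (F w)) := by
      rw [map_sub, hWMap]
      show w - (↑W⁻¹ : U →L[ℝ] U) (A (F w)) - uStar
          = w - uStar - (↑W⁻¹ : U →L[ℝ] U) (A (F w))
      abel
    have hMid : M (w - uStar) - A (F w)
        = A (F uStar) - A (F w) - A (F' w (uStar - w)) := by
      rw [hroot, map_zero]
      have h8 : A (F' w (uStar - w)) = M (uStar - w) := rfl
      rw [h8, map_sub, map_sub]
      abel
    have hA2 : ‖M (w - uStar) - A (F w)‖ ≤ ω / 2 * ‖w - uStar‖ ^ 2 := by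
      rw [hMid]
      calc ‖A (F uStar) - A (F w) - A (F' w (uStar - w))‖
          ≤ ω / 2 * ‖uStar - w‖ ^ 2 := htay
        _ = ω / 2 * ‖w - uStar‖ ^ 2 := by rw [norm_sub_rev]
    have h5 : (0 : ℝ) < 1 - ω * ‖w - uStar‖ := by linarith
    have hWn : ‖(↑W⁻¹ : U →L[ℝ] U)‖ ≤ (1 - ‖(1 : U →L[ℝ] U) - M‖)⁻¹ :=
      rr_inv_norm_le _ hlt
    have h6 : (1 - ‖(1 : U →L[ℝ] U) - M‖)⁻¹ ≤ (1 - ω * ‖w - uStar‖)⁻¹ := by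
      apply inv_anti₀ h5
      linarith
    calc ‖w - ((↑W⁻¹ : U →L[ℝ] U).comp A) (F w) - uStar‖
        = ‖(↑W⁻¹ : U →L[ℝ] U) (M (w - uStar) - A (F w))‖ := by rw [hkey]
      _ ≤ ‖(↑W⁻¹ : U →L[ℝ] U)‖ * ‖M (w - uStar) - A (F w)‖ :=
          (↑W⁻¹ : U →L[ℝ] U).le_opNorm _
      _ ≤ (1 - ω * ‖w - uStar‖)⁻¹ * (ω / 2 * ‖w - uStar‖ ^ 2) :=
          mul_le_mul (hWn.trans h6) hA2 (norm_nonneg _) (by positivity)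

/-- Affine-covariant Rall–Rheinboldt theorem. -/
theorem rall_rheinboldt
    {U Y : Type*} [NormedAddCommGroup U] [NormedSpace ℝ U] [CompleteSpace U]
    [NormedAddCommGroup Y] [NormedSpace ℝ Y] [CompleteSpace Y]
    (D : Set U) (hDopen : IsOpen D) (hDconv : Convex ℝ D)
    (F : U → Y) (F' : U → (U →L[ℝ] Y))
    (hdiff : ∀ u ∈ D, HasFDerivAt F (F' u) u) (hcont : ContinuousOn F' D)
    (uStar : U) (huStar : uStar ∈ D) (hroot : F uStar = 0)
    (A : Y →L[ℝ] U) (hAl : ∀ y, F' uStar (A y) = y) (hAr : ∀ x, A (F' uStar x) = x)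
    (ωStar : ℝ) (hω : 0 < ωStar)
    (hLip : ∀ u ∈ D, ∀ v ∈ D, ‖A.comp (F' u - F' v)‖ ≤ ωStar * ‖u - v‖)
    (ρStar : ℝ) (hρpos : 0 < ρStar) (hρ : ρStar ≤ 2 / (3 * ωStar))
    (hball : ball uStar ρStar ⊆ D) :
    (∀ u₀ ∈ ball uStar ρStar,
      ∃ u : ℕ → U, u 0 = u₀ ∧ IsNewtonSeq F F' u ∧
        (∀ k, u k ∈ ball uStar ρStar) ∧ Tendsto u atTop (𝓝 uStar)) ∧
    (∀ v ∈ D ∩ ball uStar (1 / ωStar), F v = 0 → v = uStar) := by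
  constructor
  · intro u₀ hu₀
    set r := ‖u₀ - uStar‖ with hrdef
    have hr : r < ρStar := mem_ball_iff_norm.mp hu₀
    have hr0 : 0 ≤ r := norm_nonneg _
    have hωρ : ωStar * ρStar ≤ 2 / 3 := by
      have h1 : ρStar * (3 * ωStar) ≤ 2 := (le_div_iff₀ (by positivity)).mp hρ
      nlinarith
    have hωr : ωStar * r < 2 / 3 := by nlinarith
    have hωr1 : ωStar * r < 1 := by linarith
    set q := ωStar * r / (2 * (1 - ωStar * r)) with hqdef
    have hden : (0:ℝ) < 2 * (1 - ωStar * r) := by linarith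
    have hq0 : 0 ≤ q := div_nonneg (by positivity) hden.le
    have hq1 : q < 1 := by rw [hqdef, div_lt_one hden]; linarith
    have huStarBall : uStar ∈ ball uStar ρStar := mem_ball_self hρpos
    have key : ∀ w : U, ‖w - uStar‖ ≤ r →
        ∃ B : Y →L[ℝ] U, (∀ y, F' w (B y) = y) ∧ (∀ x, B (F' w x) = x) ∧
        (Ring.inverse (A.comp (F' w))) (A (F w)) = B (F w) ∧
        ‖w - B (F w) - uStar‖ ≤ q * ‖w - uStar‖ := by
      intro w hwr
      have hwball : w ∈ ball uStar ρStar := mem_ball_iff_norm.mpr (lt_of_le_of_lt hwr hr)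
      have hwD : w ∈ D := hball hwball
      have hseg : segment ℝ w uStar ⊆ D :=
        fun x hx => hball ((convex_ball uStar ρStar).segment_subset hwball huStarBall hx)
      have hwn : ωStar * ‖w - uStar‖ < 1 := by
        have := mul_le_mul_of_nonneg_left hwr hω.le
        linarith
      obtain ⟨B, hB1, hB2, hB3, hB4⟩ := rr_step D F F' hdiff hcont uStar huStar hroot
        A hAl hAr ωStar hω.le hLip w hwD hseg hwn
      refine ⟨B, hB1, hB2, hB3, hB4.trans ?_⟩
      set s := ‖w - uStar‖ with hs
      have hs0 : 0 ≤ s := norm_nonneg _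
      have hωs : ωStar * s ≤ ωStar * r := mul_le_mul_of_nonneg_left hwr hω.le
      have hωs1 : (0:ℝ) < 1 - ωStar * s := by linarith
      rw [inv_mul_le_iff₀ hωs1]
      have h1 : (1 - ωStar * r) * q = ωStar * r / 2 := by
        rw [hqdef]; field_simp [ne_of_gt (by linarith : (0:ℝ) < 1 - ωStar * r)]
      have h3 : ωStar * s / 2 ≤ (1 - ωStar * s) * q := by
        nlinarith [mul_nonneg (by linarith : (0:ℝ) ≤ ωStar * r - ωStar * s) hq0]
      calc ωStar / 2 * s ^ 2 = (ωStar * s / 2) * s := by ring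
        _ ≤ ((1 - ωStar * s) * q) * s := mul_le_mul_of_nonneg_right h3 hs0
        _ = (1 - ωStar * s) * (q * s) := by ring
    set N : U → U := fun v => v - (Ring.inverse (A.comp (F' v))) (A (F v)) with hN
    have hinv : ∀ k, ‖N^[k] u₀ - uStar‖ ≤ q ^ k * r := by
      intro k
      induction k with
      | zero => simp [hrdef]
      | succ k ih =>
        have hqk : q ^ k ≤ 1 := pow_le_one₀ hq0 hq1.le
        have hk : ‖N^[k] u₀ - uStar‖ ≤ r := le_trans ih (by nlinarith)
        obtain ⟨B, _, _, hB3, hB4⟩ := key _ hk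
        have hstep : N^[k+1] u₀ = N^[k] u₀ - B (F (N^[k] u₀)) := by
          rw [Function.iterate_succ_apply', hN]
          simp only
          rw [hB3]
        rw [hstep]
        calc ‖N^[k] u₀ - B (F (N^[k] u₀)) - uStar‖ ≤ q * ‖N^[k] u₀ - uStar‖ := hB4
          _ ≤ q * (q ^ k * r) := mul_le_mul_of_nonneg_left ih hq0
          _ = q ^ (k+1) * r := by ring
    have hle : ∀ k, ‖N^[k] u₀ - uStar‖ ≤ r := by
      intro k
      have hqk : q ^ k ≤ 1 := pow_le_one₀ hq0 hq1.le
      exact le_trans (hinv k) (by nlinarith)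
    refine ⟨fun k => N^[k] u₀, rfl, ?_, ?_, ?_⟩
    · intro k
      obtain ⟨B, hB1, hB2, hB3, _⟩ := key _ (hle k)
      refine ⟨B, hB1, hB2, ?_⟩
      show N^[k+1] u₀ = N^[k] u₀ - B (F (N^[k] u₀))
      rw [Function.iterate_succ_apply', hN]
      simp only
      rw [hB3]
    · intro k
      exact mem_ball_iff_norm.mpr (lt_of_le_of_lt (hle k) hr)
    · rw [tendsto_iff_norm_sub_tendsto_zero]
      have hgeo : Tendsto (fun k : ℕ => q ^ k * r) atTop (𝓝 0) := by
        simpa using (tendsto_pow_atTop_nhds_zero_of_lt_one hq0 hq1).mul_const r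
      exact squeeze_zero (fun k => norm_nonneg _) hinv hgeo
  · rintro v ⟨hvD, hvb⟩ hFv
    by_contra hne
    have hseg : segment ℝ uStar v ⊆ D := hDconv.segment_subset huStar hvD
    have htay := rr_taylor_aux D F F' hdiff hcont A ωStar hω.le hLip uStar v hseg
    rw [hFv, hroot, map_zero, hAr] at htay
    have h1 : ‖v - uStar‖ ≤ ωStar / 2 * ‖v - uStar‖ ^ 2 := by
      have := htay
      rw [norm_sub_rev v uStar] at this ⊢
      simpa using this
    have h2 : ‖v - uStar‖ < 1 / ωStar := mem_ball_iff_norm.mp hvb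
    have h3 : 0 < ‖v - uStar‖ := by
      rw [norm_pos_iff, sub_ne_zero]
      exact hne
    have h4 : ωStar * ‖v - uStar‖ < 1 := by
      rw [lt_div_iff₀ hω] at h2
      linarith
    nlinarith
end

section
/- Under the Rall–Rheinboldt hypotheses at a root u* with affine-covariant Lipschitz constant ω*, if the Newton sequence (u_k) starting in B(u*, ρ*) with ρ* ≤ 2/(3ω*) is well-defined, then the Newton error contracts: ‖u_{k+1} − u*‖ ≤ (ω*/2)·‖u_k − u*‖² / (1 − ω*‖u_k − u*‖), and hence convergence is quadratic. -/
open Metric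

/-- Quadratic contraction of the Newton error under the Rall–Rheinboldt
hypotheses: one Newton step from `u ∈ B(u*, ρ*)`, `ρ* ≤ 2/(3ω*)`, satisfies
`‖u₊ - u*‖ ≤ (ω*/2)‖u - u*‖² / (1 - ω*‖u - u*‖)`. -/
theorem newton_error_contraction
    {U Y : Type*} [NormedAddCommGroup U] [NormedSpace ℝ U] [CompleteSpace U]
    [NormedAddCommGroup Y] [NormedSpace ℝ Y] [CompleteSpace Y]
    (D : Set U) (hDopen : IsOpen D) (hDconv : Convex ℝ D)
    (F : U → Y) (F' : U → (U →L[ℝ] Y))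
    (hdiff : ∀ u ∈ D, HasFDerivAt F (F' u) u) (hcont : ContinuousOn F' D)
    (uStar : U) (huStar : uStar ∈ D) (hroot : F uStar = 0)
    (A : Y →L[ℝ] U) (hAl : ∀ y, F' uStar (A y) = y) (hAr : ∀ x, A (F' uStar x) = x)
    (ωStar : ℝ) (hω : 0 < ωStar)
    (hLip : ∀ u ∈ D, ∀ v ∈ D, ‖A.comp (F' u - F' v)‖ ≤ ωStar * ‖u - v‖)
    (ρStar : ℝ) (hρpos : 0 < ρStar) (hρ : ρStar ≤ 2 / (3 * ωStar))
    (hball : ball uStar ρStar ⊆ D)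
    (u : U) (hu : u ∈ ball uStar ρStar)
    (Au : Y →L[ℝ] U) (hAul : ∀ y, F' u (Au y) = y) (hAur : ∀ x, Au (F' u x) = x)
    (unext : U) (hstep : unext = u - Au (F u)) :
    ‖unext - uStar‖ ≤ (ωStar / 2) * ‖u - uStar‖ ^ 2 / (1 - ωStar * ‖u - uStar‖) := by
  set e : U := u - uStar with he
  set t : ℝ := ‖e‖ with ht
  have huD : u ∈ D := hball hu
  have htρ : t < ρStar := by simpa [mem_ball, dist_eq_norm] using hu
  have hωt : ωStar * t < 1 := by
    have h1 : ωStar * t < ωStar * ρStar := by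
      exact (mul_lt_mul_iff_right₀ hω).2 htρ
    have h2 : ωStar * ρStar ≤ 2 / 3 := by
      calc ωStar * ρStar ≤ ωStar * (2 / (3 * ωStar)) := by gcongr
        _ = 2 / 3 := by field_simp
    linarith
  have hden : 0 < 1 - ωStar * t := by linarith
  -- path and segment membership
  set p : ℝ → U := fun s => uStar + s • e with hp
  have hpmem : ∀ s ∈ Set.Icc (0:ℝ) 1, p s ∈ D := by
    intro s hs
    apply hball
    rw [mem_ball, dist_eq_norm]
    have : p s - uStar = s • e := by simp [hp]
    rw [this, norm_smul, Real.norm_eq_abs, abs_of_nonneg hs.1]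
    calc s * t ≤ 1 * t := by
          exact mul_le_mul_of_nonneg_right hs.2 (norm_nonneg _)
      _ = t := one_mul t
      _ < ρStar := htρ
  -- derivative of h s = A (F (p s)) - s • A (F' u e)
  set φ : ℝ → U := fun s => A ((F' (p s)) e) - A ((F' u) e) with hφ
  set h : ℝ → U := fun s => A (F (p s)) - s • A ((F' u) e) with hh
  have hderiv : ∀ s ∈ Set.Icc (0:ℝ) 1, HasDerivAt h (φ s) s := by
    intro s hs
    have hps : HasDerivAt p e s := by
      simpa [hp] using ((hasDerivAt_id s).smul_const e).const_add uStar
    have hF : HasFDerivAt F (F' (p s)) (p s) := hdiff _ (hpmem s hs)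
    have h1 : HasDerivAt (fun s => F (p s)) ((F' (p s)) e) s := hF.comp_hasDerivAt s hps
    have h2 : HasDerivAt (fun s => A (F (p s))) (A ((F' (p s)) e)) s :=
      (A.hasFDerivAt.comp_hasDerivAt s h1)
    have := h2.sub ((hasDerivAt_id s).smul_const (A ((F' u) e)))
    simp only [one_smul] at this
    exact this
  -- continuity of φ on [0,1]
  have hpcont : ContinuousOn p (Set.Icc (0:ℝ) 1) :=
    (continuous_const.add (continuous_id.smul continuous_const)).continuousOn
  have hφcont : ContinuousOn φ (Set.Icc (0:ℝ) 1) := by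
    apply ContinuousOn.sub _ continuousOn_const
    have : ContinuousOn (fun s => F' (p s)) (Set.Icc (0:ℝ) 1) :=
      hcont.comp hpcont hpmem
    exact A.continuous.comp_continuousOn
      ((ContinuousLinearMap.apply ℝ Y e).continuous.comp_continuousOn this)
  have hφint : IntervalIntegrable φ MeasureTheory.volume 0 1 := by
    apply ContinuousOn.intervalIntegrable
    simpa [Set.uIcc_of_le (by norm_num : (0:ℝ) ≤ 1)] using hφcont
  -- FTC
  have hFTC : h 1 - h 0 = ∫ s in (0:ℝ)..1, φ s := by
    rw [intervalIntegral.integral_eq_sub_of_hasDerivAt (fun s hs => hderiv s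
      (by simpa [Set.uIcc_of_le (by norm_num : (0:ℝ) ≤ 1)] using hs)) hφint]
  -- pointwise bound on φ
  have hφbound : ∀ s ∈ Set.Icc (0:ℝ) 1, ‖φ s‖ ≤ ωStar * (1 - s) * t ^ 2 := by
    intro s hs
    have hmem := hpmem s hs
    have hC : ‖A.comp (F' (p s) - F' u)‖ ≤ ωStar * ‖p s - u‖ := hLip _ hmem _ huD
    have hpsu : p s - u = (s - 1) • e := by
      have : p s - u = s • e - e := by
        simp only [hp]
        abel_nf
        simp [he]
        abel
      rw [this, sub_smul, one_smul]
    have hnorm : ‖p s - u‖ = (1 - s) * t := by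
      rw [hpsu, norm_smul, Real.norm_eq_abs, abs_of_nonpos (by linarith [hs.2]), ht]
      ring_nf
    have hφeq : φ s = (A.comp (F' (p s) - F' u)) e := by
      simp [hφ, ContinuousLinearMap.comp_apply, ContinuousLinearMap.sub_apply, map_sub]
    rw [hφeq]
    calc ‖(A.comp (F' (p s) - F' u)) e‖ ≤ ‖A.comp (F' (p s) - F' u)‖ * t :=
          (A.comp (F' (p s) - F' u)).le_opNorm e
      _ ≤ (ωStar * ((1 - s) * t)) * t := by
          have hC' : ‖A.comp (F' (p s) - F' u)‖ ≤ ωStar * ((1 - s) * t) := by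
            rw [← hnorm]; exact hC
          exact mul_le_mul_of_nonneg_right hC' (norm_nonneg _)
      _ = ωStar * (1 - s) * t ^ 2 := by ring
  -- integral bound
  have hint : ‖h 1 - h 0‖ ≤ ωStar / 2 * t ^ 2 := by
    rw [hFTC]
    have : (∫ s in (0:ℝ)..1, ωStar * (1 - s) * t ^ 2) = ωStar / 2 * t ^ 2 := by
      have : (∫ s in (0:ℝ)..1, ωStar * (1 - s) * t ^ 2)
          = ωStar * t ^ 2 * ∫ s in (0:ℝ)..1, (1 - s) := by
        rw [← intervalIntegral.integral_const_mul]
        congr 1; ext s; ring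
      rw [this]
      have h12 : (∫ s in (0:ℝ)..1, (1 - s)) = 1 / 2 := by
        simp [intervalIntegral.integral_sub intervalIntegrable_const
          (intervalIntegral.intervalIntegrable_id)]
        norm_num
      rw [h12]; ring
    have hgint : IntervalIntegrable (fun s => ωStar * (1 - s) * t ^ 2)
        MeasureTheory.volume 0 1 := by
      apply Continuous.intervalIntegrable
      fun_prop
    have hae : ∀ᵐ s ∂MeasureTheory.volume.restrict (Set.uIoc (0:ℝ) 1),
        ‖φ s‖ ≤ ωStar * (1 - s) * t ^ 2 := by
      refine (MeasureTheory.ae_restrict_mem measurableSet_uIoc).mono (fun s hs => ?_)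
      rw [Set.uIoc_of_le (by norm_num : (0:ℝ) ≤ 1)] at hs
      exact hφbound s (Set.Ioc_subset_Icc_self hs)
    calc ‖∫ s in (0:ℝ)..1, φ s‖
        ≤ |∫ s in (0:ℝ)..1, ωStar * (1 - s) * t ^ 2| :=
          intervalIntegral.norm_integral_le_abs_of_norm_le hae hgint
      _ = ωStar / 2 * t ^ 2 := by rw [this]; exact abs_of_nonneg (by positivity)
  -- value of h 1 - h 0
  have hval : h 1 - h 0 = A (F u) - A ((F' u) e) := by
    have h1 : p 1 = u := by simp [hp, he]
    have h0 : p 0 = uStar := by simp [hp]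
    simp [hh, h1, h0, hroot]
  -- algebra: unext - uStar = - Au (F u - F' u e), and relate via B = Au ∘ F'(u*)
  set C : U →L[ℝ] U := A.comp (F' u - F' uStar) with hCdef
  set B : U →L[ℝ] U := Au.comp (F' uStar) with hBdef
  have hCn : ‖C‖ ≤ ωStar * t := by
    simpa [hCdef, he] using hLip u huD uStar huStar
  have hBid : B = ContinuousLinearMap.id ℝ U - B.comp C := by
    ext x
    simp only [hBdef, hCdef, ContinuousLinearMap.comp_apply,
      ContinuousLinearMap.sub_apply, ContinuousLinearMap.id_apply]
    rw [hAl, map_sub, hAur]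
    abel
  have hBn : ‖B‖ ≤ 1 / (1 - ωStar * t) := by
    have h1 : ‖B‖ ≤ 1 + ‖B‖ * (ωStar * t) := by
      calc ‖B‖ = ‖ContinuousLinearMap.id ℝ U - B.comp C‖ := by rw [← hBid]
        _ ≤ ‖ContinuousLinearMap.id ℝ U‖ + ‖B.comp C‖ := norm_sub_le _ _
        _ ≤ 1 + ‖B‖ * ‖C‖ := by
            gcongr
            · exact ContinuousLinearMap.norm_id_le
            · exact ContinuousLinearMap.opNorm_comp_le _ _
        _ ≤ 1 + ‖B‖ * (ωStar * t) := by
            gcongr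
    rw [le_div_iff₀ hden]
    nlinarith [norm_nonneg B]
  -- put everything together
  set q : U := A (F u) - A ((F' u) e) with hq
  have hqn : ‖q‖ ≤ ωStar / 2 * t ^ 2 := by rw [← hval]; exact hint
  have hkey : unext - uStar = -(B q) := by
    rw [hstep]
    have hFu : F u = (F' u) e + ((F u) - (F' u) e) := by abel
    have h1 : Au (F u) = e + Au (F u - (F' u) e) := by
      conv_lhs => rw [hFu]
      rw [map_add, hAur]
    have h2 : F u - (F' u) e = F' uStar q := by
      rw [hq, ← map_sub, hAl]
    rw [h1, h2]
    simp only [hBdef, ContinuousLinearMap.comp_apply, he]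
    abel
  rw [hkey, norm_neg]
  calc ‖B q‖ ≤ ‖B‖ * ‖q‖ := B.le_opNorm q
    _ ≤ (1 / (1 - ωStar * t)) * (ωStar / 2 * t ^ 2) := by
        apply mul_le_mul hBn hqn (norm_nonneg _)
        positivity
    _ = ωStar / 2 * t ^ 2 / (1 - ωStar * t) := by ring
end
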